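/- Let 𝔅 be a function from density matrices to nonnegative reals that is tensor-product additive (𝔅(ρ⊗σ) = 𝔅(ρ)+𝔅(σ)), superadditive (𝔅(τ) ≥ 𝔅(Tr_B τ) + 𝔅(Tr_A τ) for any bipartite state τ on AB), and monotone under a class 𝕆 of maps. Suppose for some rate r > 0 and every sufficiently large n there exist Λ_n ∈ 𝕆 mapping states on S^{⊗n} to states on S'^{⊗⌊rn⌋} with Tr_{\i} Λ_n(ρ^{⊗n}) = ρ' for every subsystem i. Then 𝔅(ρ) ≥ r·𝔅(ρ'). -/

import Mathlib

open Matrix ComplexOrder Kronecker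

/-- `ρ` is a density matrix. -/
def IsDensityMatrix {n : Type*} [Fintype n] (ρ : Matrix n n ℂ) : Prop :=
  ρ.PosSemidef ∧ ρ.trace = 1

/-- The `n`-fold tensor (Kronecker) power of a matrix, indexed by `Fin n → I`. -/
def tpow {I : Type*} [Fintype I] (A : Matrix I I ℂ) (n : ℕ) :
    Matrix (Fin n → I) (Fin n → I) ℂ :=
  Matrix.of fun f g => ∏ i, A (f i) (g i)

/-- The marginal on the `k`-th site of a state on `n` sites. -/
noncomputable def marginal {I : Type*} [Fintype I] [DecidableEq I] {n : ℕ}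
    (τ : Matrix (Fin n → I) (Fin n → I) ℂ) (k : Fin n) : Matrix I I ℂ :=
  Matrix.of fun a b =>
    ∑ f : Fin n → I, if f k = a then τ f (Function.update f k b) else 0

/-- Partial trace over the second factor of a bipartite matrix. -/
noncomputable def ptraceB {A B : Type*} [Fintype A] [Fintype B]
    (τ : Matrix (A × B) (A × B) ℂ) : Matrix A A ℂ :=
  Matrix.of fun i j => ∑ k : B, τ (i, k) (j, k)

/-- Partial trace over the first factor of a bipartite matrix. -/
noncomputable def ptraceA {A B : Type*} [Fintype A] [Fintype B]
    (τ : Matrix (A × B) (A × B) ℂ) : Matrix B B ℂ :=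
  Matrix.of fun i j => ∑ k : A, τ (k, i) (k, j)

lemma tpow_posSemidef {I : Type*} [Fintype I] [DecidableEq I] {A : Matrix I I ℂ}
    (hA : A.PosSemidef) (n : ℕ) : (tpow A n).PosSemidef := by
  obtain ⟨B, rfl⟩ : ∃ B : Matrix I I ℂ, A = Bᴴ * B := by
    open scoped MatrixOrder in exact CStarAlgebra.nonneg_iff_eq_star_mul_self.mp hA.nonneg
  suffices h : ∃ C : Matrix (Fin n → I) (Fin n → I) ℂ, tpow (Bᴴ * B) n = Cᴴ * C by
    obtain ⟨C, hC⟩ := h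
    rw [hC]
    exact posSemidef_conjTranspose_mul_self C
  refine ⟨tpow B n, ?_⟩
  ext f g
  simp only [tpow, Matrix.of_apply, Matrix.mul_apply, Matrix.conjTranspose_apply]
  rw [Finset.prod_univ_sum]
  refine Finset.sum_congr rfl fun h _ => ?_
  simp [Finset.prod_mul_distrib, star_prod]

lemma tpow_trace {I : Type*} [Fintype I] (A : Matrix I I ℂ) (n : ℕ) :
    (tpow A n).trace = A.trace ^ n := by
  simp only [Matrix.trace, Matrix.diag, tpow, Matrix.of_apply]
  rw [← Fintype.prod_sum (fun (_ : Fin n) (k : I) => A k k)]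
  simp

lemma tpow_isDensityMatrix {I : Type*} [Fintype I] [DecidableEq I] {A : Matrix I I ℂ}
    (hA : IsDensityMatrix A) (n : ℕ) : IsDensityMatrix (tpow A n) :=
  ⟨tpow_posSemidef hA.1 n, by rw [tpow_trace, hA.2, one_pow]⟩

/-- A tensor-product additive, superadditive resource measure `𝔅`, monotone under the
operations implementing an asymptotic exact marginal transformation from `ρ` to `ρ'` at
rate `r`, satisfies `𝔅(ρ) ≥ r·𝔅(ρ')`. -/
theorem measure_bound_asymptotic_exact_marginal
    (𝔅 : ∀ {I : Type} [Fintype I] [DecidableEq I], Matrix I I ℂ → ℝ)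
    (hnonneg : ∀ (I : Type) [Fintype I] [DecidableEq I] (σ : Matrix I I ℂ),
      IsDensityMatrix σ → 0 ≤ 𝔅 σ)
    (haddkron : ∀ (A B : Type) [Fintype A] [DecidableEq A] [Fintype B] [DecidableEq B]
      (σ₁ : Matrix A A ℂ) (σ₂ : Matrix B B ℂ), IsDensityMatrix σ₁ → IsDensityMatrix σ₂ →
      𝔅 (σ₁ ⊗ₖ σ₂) = 𝔅 σ₁ + 𝔅 σ₂)
    (haddpow : ∀ (I : Type) [Fintype I] [DecidableEq I] (σ : Matrix I I ℂ) (n : ℕ),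
      IsDensityMatrix σ → 𝔅 (tpow σ n) = (n : ℝ) * 𝔅 σ)
    (hsuper : ∀ (A B : Type) [Fintype A] [DecidableEq A] [Fintype B] [DecidableEq B]
      (τ : Matrix (A × B) (A × B) ℂ), IsDensityMatrix τ →
      𝔅 (ptraceB τ) + 𝔅 (ptraceA τ) ≤ 𝔅 τ)
    (hsuperMulti : ∀ (I : Type) [Fintype I] [DecidableEq I] (n : ℕ)
      (τ : Matrix (Fin n → I) (Fin n → I) ℂ), IsDensityMatrix τ →
      ∑ i : Fin n, 𝔅 (marginal τ i) ≤ 𝔅 τ)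
    (dS dS' : ℕ) (ρ : Matrix (Fin dS) (Fin dS) ℂ) (ρ' : Matrix (Fin dS') (Fin dS') ℂ)
    (hρ : IsDensityMatrix ρ) (hρ' : IsDensityMatrix ρ')
    (r : ℝ) (hr : 0 < r)
    (hmaps : ∃ N : ℕ, ∀ n ≥ N,
      ∃ Λ : Matrix (Fin n → Fin dS) (Fin n → Fin dS) ℂ →
        Matrix (Fin ⌊r * n⌋₊ → Fin dS') (Fin ⌊r * n⌋₊ → Fin dS') ℂ,
        (∀ σ, IsDensityMatrix σ → IsDensityMatrix (Λ σ) ∧ 𝔅 (Λ σ) ≤ 𝔅 σ) ∧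
        (∀ i : Fin ⌊r * n⌋₊, marginal (Λ (tpow ρ n)) i = ρ')) :
    r * 𝔅 ρ' ≤ 𝔅 ρ := by
  obtain ⟨N, hN⟩ := hmaps
  have key : ∀ n ≥ N, (⌊r * n⌋₊ : ℝ) * 𝔅 ρ' ≤ (n : ℝ) * 𝔅 ρ := by
    intro n hn
    obtain ⟨Λ, hΛ, hmarg⟩ := hN n hn
    have hdens := tpow_isDensityMatrix hρ n
    obtain ⟨hΛdens, hΛmono⟩ := hΛ _ hdens
    have h2 := hsuperMulti _ ⌊r * n⌋₊ _ hΛdens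
    have h3 : ∑ i : Fin ⌊r * n⌋₊, 𝔅 (marginal (Λ (tpow ρ n)) i) = (⌊r * n⌋₊ : ℝ) * 𝔅 ρ' := by
      rw [Finset.sum_congr rfl fun i _ => by rw [hmarg i]]
      simp [mul_comm]
    calc (⌊r * n⌋₊ : ℝ) * 𝔅 ρ' = ∑ i : Fin ⌊r * n⌋₊, 𝔅 (marginal (Λ (tpow ρ n)) i) := h3.symm
      _ ≤ 𝔅 (Λ (tpow ρ n)) := h2
      _ ≤ 𝔅 (tpow ρ n) := hΛmono
      _ = (n : ℝ) * 𝔅 ρ := haddpow _ ρ n hρ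
  by_contra hcon
  push_neg at hcon
  have hB'nn := hnonneg _ ρ' hρ'
  have hBnn := hnonneg _ ρ hρ
  have hB' : 0 < 𝔅 ρ' := by
    rcases lt_or_eq_of_le hB'nn with h | h
    · exact h
    · exact absurd hcon (by rw [← h]; simp [hBnn.not_gt])
  set c := r * 𝔅 ρ' - 𝔅 ρ with hc
  have hcpos : 0 < c := by simp [hc, sub_pos, hcon]
  obtain ⟨n, hngt⟩ := exists_nat_gt (max (N : ℝ) (𝔅 ρ' / c))
  have hnN : n ≥ N := by
    have := (le_max_left (N : ℝ) (𝔅 ρ' / c)).trans hngt.le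
    exact_mod_cast this
  have hkey := key n hnN
  have hfloor : r * n - 1 < (⌊r * n⌋₊ : ℝ) := Nat.sub_one_lt_floor _
  have h3 : (r * n - 1) * 𝔅 ρ' ≤ (n : ℝ) * 𝔅 ρ :=
    (mul_le_mul_of_nonneg_right hfloor.le hB'nn).trans hkey
  have hnc : 𝔅 ρ' / c < n := (le_max_right _ _).trans_lt hngt
  have hnc' : 𝔅 ρ' < n * c := by
    rw [div_lt_iff₀ hcpos] at hnc
    linarith
  nlinarith [hnc', h3]
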